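/- Let f = u^α − v^β·y^γ be a binomial in ℤ[u₁,…,u_k, v₁,…,v_{r−k}, y_{r+1}^{±},…,y_n^{±}] with α ∈ ℕ^k, β ∈ ℕ^{r−k}, γ ∈ ℤ^{n−r}, and set d = |α| = α₁ + ⋯ + α_k. Fix a prime p, and let J_p ⊆ 𝔽_p[u,v,y^{±}] be the ideal generated by f together with all Hasse derivatives of f of order < d (with their binomial-coefficient coefficients, reduced mod p), and let I_p be the ideal generated by f together with all Hasse derivative monomials u^{α−ζ} (|ζ| < d, ζ ≤ α) and v^{β−δ} (|δ| < d, δ ≤ β). Then V(I_p) = V(J_p) as subsets of Spec 𝔽_p[u,v,y^{±}]. -/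

import Mathlib

noncomputable section

/-- The ring `𝔽_p[u, v, y^{±}]` (`k[u,v,y^{±}]` for a coefficient ring `k`), realized as
the monoid algebra of `ℕ^U × ℕ^V × ℤ^Y`. -/
abbrev BinRingK (k : Type*) [CommRing k] (U V Y : Type*) : Type _ :=
  AddMonoidAlgebra k ((U →₀ ℕ) × (V →₀ ℕ) × (Y →₀ ℤ))

/-- The monomial `u^a · v^b · y^c`. -/
def monoK {k : Type*} [CommRing k] {U V Y : Type*}
    (a : U →₀ ℕ) (b : V →₀ ℕ) (c : Y →₀ ℤ) : BinRingK k U V Y :=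
  AddMonoidAlgebra.single (a, b, c) (1 : k)

/-- Total degree `|a|` of an exponent vector. -/
def deg {ι : Type*} (a : ι →₀ ℕ) : ℕ := a.sum fun _ n => n

lemma deg_mono {ι : Type*} {a b : ι →₀ ℕ} (h : a ≤ b) : deg a ≤ deg b := by
  unfold deg
  rw [Finsupp.sum, Finsupp.sum]
  have hsub : a.support ⊆ b.support := by
    intro i hi
    rw [Finsupp.mem_support_iff] at hi ⊢
    have := Finsupp.le_def.mp h i
    omega
  calc ∑ i ∈ a.support, a i ≤ ∑ i ∈ b.support, a i := by
        exact Finset.sum_le_sum_of_subset hsub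
    _ ≤ ∑ i ∈ b.support, b i := Finset.sum_le_sum fun i _ => Finsupp.le_def.mp h i

lemma e_single_pow {ι R : Type*} [CommRing R]
    (e : (ι →₀ ℕ) → R) (he0 : e 0 = 1)
    (hmul : ∀ a b, e (a + b) = e a * e b) (j : ι) :
    ∀ b : ℕ, e (Finsupp.single j b) = e (Finsupp.single j 1) ^ b := by
  intro b
  induction b with
  | zero => simpa using he0
  | succ n ihn =>
    have : Finsupp.single j (n + 1) = Finsupp.single j n + Finsupp.single j 1 := by
      rw [← Finsupp.single_add]
    rw [this, hmul, ihn, pow_succ]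

/-- If a prime ideal contains the "monomial" `e m`, then `m = 0` or the prime
contains some "variable" `e (single j 1)` with `j` in the support of `m`. -/
lemma prime_mem_of_mono {ι R : Type*} [CommRing R] (𝔭 : Ideal R) (hP : 𝔭.IsPrime)
    (e : (ι →₀ ℕ) → R) (he0 : e 0 = 1)
    (hmul : ∀ a b, e (a + b) = e a * e b) (m : ι →₀ ℕ) :
    e m ∈ 𝔭 → m = 0 ∨ ∃ j, m j ≠ 0 ∧ e (Finsupp.single j 1) ∈ 𝔭 := by
  induction m using Finsupp.induction with
  | zero => intro _; exact Or.inl rfl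
  | single_add a b f haf hb ih =>
    intro hm
    rw [hmul] at hm
    rcases hP.mem_or_mem hm with h1 | h2
    · rw [e_single_pow e he0 hmul a b] at h1
      refine Or.inr ⟨a, ?_, hP.mem_of_pow_mem b h1⟩
      simp only [Finsupp.add_apply, Finsupp.single_eq_same]
      omega
    · rcases ih h2 with rfl | ⟨j, hj, hjP⟩
      · rw [he0] at h2
        exact absurd ((Ideal.eq_top_iff_one 𝔭).mpr h2) hP.ne_top
      · refine Or.inr ⟨j, ?_, hjP⟩
        simp only [Finsupp.add_apply]
        omega

/-- Key lemma: if a prime ideal contains all "coefficient `1`" Hasse derivative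
monomials (those with `σ` a restriction of `β`, which have multinomial coefficient 1),
then it contains all Hasse derivative monomials `e (β - δ)` with `δ ≤ β`, `|δ| < d`. -/
lemma key {ι R : Type*} [CommRing R] (𝔭 : Ideal R) (hP : 𝔭.IsPrime)
    (e : (ι →₀ ℕ) → R) (he0 : e 0 = 1)
    (hmul : ∀ a b, e (a + b) = e a * e b)
    (d : ℕ) (β δ : ι →₀ ℕ) (hδβ : δ ≤ β) (hδd : deg δ < d)
    (H : ∀ σ : ι →₀ ℕ, σ ≤ β → deg σ < d → (∀ i, σ i = 0 ∨ σ i = β i) →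
      e (β - σ) ∈ 𝔭) :
    e (β - δ) ∈ 𝔭 := by
  classical
  have aux : ∀ n (S : Finset ι), (∀ j ∈ S, δ j = β j) →
      (β.support \ S).card ≤ n → e (β - δ) ∈ 𝔭 := by
    intro n
    induction n with
    | zero =>
      intro S hS hc
      set σ : ι →₀ ℕ := β.filter (· ∈ S) with hσdef
      have hσapp : ∀ i, σ i = if i ∈ S then β i else 0 := fun i => rfl
      have hσδ : σ ≤ δ := by
        rw [Finsupp.le_def]
        intro i
        rw [hσapp]
        split
        · next h => rw [← hS i h]
        · exact Nat.zero_le _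
      have hσβ : σ ≤ β := by
        rw [Finsupp.le_def]
        intro i
        rw [hσapp]; split <;> simp
      have hres : ∀ i, σ i = 0 ∨ σ i = β i := by
        intro i; rw [hσapp]; split
        · exact Or.inr rfl
        · exact Or.inl rfl
      have hmem : e (β - σ) ∈ 𝔭 :=
        H σ hσβ (lt_of_le_of_lt (deg_mono hσδ) hδd) hres
      rcases prime_mem_of_mono 𝔭 hP e he0 hmul (β - σ) hmem with h0 | ⟨j, hj, hjP⟩
      · -- β ≤ σ ≤ δ ≤ β, so β - δ = 0 = β - σ
        have hβσ : β ≤ σ := tsub_eq_zero_iff_le.mp h0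
        have : β - δ = 0 := tsub_eq_zero_iff_le.mpr (le_trans hβσ hσδ)
        rw [this, ← h0]; exact hmem
      · exfalso
        rw [Finsupp.tsub_apply, hσapp] at hj
        have hjS : j ∉ S := by intro h; rw [if_pos h] at hj; omega
        have hjsupp : j ∈ β.support \ S := by
          rw [Finset.mem_sdiff, Finsupp.mem_support_iff]
          rw [if_neg hjS] at hj
          exact ⟨by omega, hjS⟩
        have := Finset.card_pos.mpr ⟨j, hjsupp⟩
        omega
    | succ n ih =>
      intro S hS hc
      set σ : ι →₀ ℕ := β.filter (· ∈ S) with hσdef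
      have hσapp : ∀ i, σ i = if i ∈ S then β i else 0 := fun i => rfl
      have hσδ : σ ≤ δ := by
        rw [Finsupp.le_def]
        intro i
        rw [hσapp]
        split
        · next h => rw [← hS i h]
        · exact Nat.zero_le _
      have hσβ : σ ≤ β := by
        rw [Finsupp.le_def]
        intro i
        rw [hσapp]; split <;> simp
      have hres : ∀ i, σ i = 0 ∨ σ i = β i := by
        intro i; rw [hσapp]; split
        · exact Or.inr rfl
        · exact Or.inl rfl
      have hmem : e (β - σ) ∈ 𝔭 :=
        H σ hσβ (lt_of_le_of_lt (deg_mono hσδ) hδd) hres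
      rcases prime_mem_of_mono 𝔭 hP e he0 hmul (β - σ) hmem with h0 | ⟨j, hj, hjP⟩
      · have hβσ : β ≤ σ := tsub_eq_zero_iff_le.mp h0
        have : β - δ = 0 := tsub_eq_zero_iff_le.mpr (le_trans hβσ hσδ)
        rw [this, ← h0]; exact hmem
      · rw [Finsupp.tsub_apply, hσapp] at hj
        have hjS : j ∉ S := by intro h; rw [if_pos h] at hj; omega
        rw [if_neg hjS] at hj
        have hjβ : β j ≠ 0 := by omega
        by_cases hcase : δ j = β j
        · -- recurse with S ∪ {j}
          have hjsupp : j ∈ β.support \ S := by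
            rw [Finset.mem_sdiff, Finsupp.mem_support_iff]
            exact ⟨hjβ, hjS⟩
          refine ih (insert j S) ?_ ?_
          · intro l hl
            rcases Finset.mem_insert.mp hl with rfl | hl
            · exact hcase
            · exact hS l hl
          · rw [Finset.sdiff_insert, Finset.card_erase_of_mem hjsupp]
            omega
        · -- δ j < β j : the variable e(single j 1) divides e(β - δ)
          have hlt : δ j < β j := lt_of_le_of_ne (Finsupp.le_def.mp hδβ j) hcase
          have hsle : Finsupp.single j 1 ≤ β - δ := by
            rw [Finsupp.single_le_iff, Finsupp.tsub_apply]
            omega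
          have hdec : Finsupp.single j 1 + (β - δ - Finsupp.single j 1) = β - δ :=
            add_tsub_cancel_of_le hsle
          rw [← hdec, hmul]
          exact Ideal.mul_mem_right _ 𝔭 hjP
  exact aux β.support.card ∅ (by simp) (by simp)

/-- Let `f = u^α − v^β y^γ` with `d = |α|`, and fix a prime `p`.
Let `J_p ⊆ 𝔽_p[u,v,y^{±}]` be the ideal generated by `f` and all Hasse derivatives of `f`
of order `< d` (with their multinomial-coefficient coefficients reduced mod `p`), and let
`I_p` be the ideal generated by `f` and all Hasse derivative *monomials* `u^{α−ζ}`
(`ζ ≤ α`, `|ζ| < d`) and `v^{β−δ}` (`δ ≤ β`, `|δ| < d`). Then `V(I_p) = V(J_p)` in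
`Spec 𝔽_p[u,v,y^{±}]`, i.e. a prime contains `I_p` iff it contains `J_p`. -/
theorem stmt4 {U V Y : Type*} [Fintype U] [Fintype V]
    (p : ℕ) (hp : p.Prime)
    (α : U →₀ ℕ) (β : V →₀ ℕ) (γ : Y →₀ ℤ)
    (d : ℕ) (hd : d = deg α)
    (f : BinRingK (ZMod p) U V Y) (hf : f = monoK α 0 0 - monoK 0 β γ)
    (Jp Ip : Ideal (BinRingK (ZMod p) U V Y))
    (hJ : Jp = Ideal.span ({f} ∪
        {g | ∃ ζ : U →₀ ℕ, ζ ≤ α ∧ deg ζ < d ∧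
          g = ((∏ i : U, (α i).choose (ζ i) : ℕ) : ZMod p) • monoK (α - ζ) 0 0} ∪
        {g | ∃ δ : V →₀ ℕ, δ ≤ β ∧ deg δ < d ∧
          g = ((∏ j : V, (β j).choose (δ j) : ℕ) : ZMod p) • monoK 0 (β - δ) 0}))
    (hI : Ip = Ideal.span ({f} ∪
        {g | ∃ ζ : U →₀ ℕ, ζ ≤ α ∧ deg ζ < d ∧ g = monoK (α - ζ) 0 0} ∪
        {g | ∃ δ : V →₀ ℕ, δ ≤ β ∧ deg δ < d ∧ g = monoK 0 (β - δ) 0})) :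
    ∀ 𝔭 : Ideal (BinRingK (ZMod p) U V Y), 𝔭.IsPrime → (Ip ≤ 𝔭 ↔ Jp ≤ 𝔭) := by
  intro 𝔭 hP
  have he0U : (monoK (k := ZMod p) (U := U) (V := V) (Y := Y) 0 0 0) = 1 := rfl
  have hmulU : ∀ a b : U →₀ ℕ,
      monoK (k := ZMod p) (U := U) (V := V) (Y := Y) (a + b) 0 0 =
        monoK a 0 0 * monoK b 0 0 := by
    intro a b
    rw [monoK, monoK, monoK, AddMonoidAlgebra.single_mul_single]
    congr 1 <;> simp
  have hmulV : ∀ a b : V →₀ ℕ,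
      monoK (k := ZMod p) (U := U) (V := V) (Y := Y) 0 (a + b) 0 =
        monoK 0 a 0 * monoK 0 b 0 := by
    intro a b
    rw [monoK, monoK, monoK, AddMonoidAlgebra.single_mul_single]
    congr 1 <;> simp
  constructor
  · -- easy direction: Jp ≤ Ip
    intro hIle
    refine le_trans ?_ hIle
    rw [hJ, hI, Ideal.span_le]
    rintro g ((hg | ⟨ζ, hζα, hζd, rfl⟩) | ⟨δ, hδβ, hδd, rfl⟩)
    · exact Ideal.subset_span (Or.inl (Or.inl hg))
    · rw [Algebra.smul_def]
      exact Ideal.mul_mem_left _ _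
        (Ideal.subset_span (Or.inl (Or.inr ⟨ζ, hζα, hζd, rfl⟩)))
    · rw [Algebra.smul_def]
      exact Ideal.mul_mem_left _ _
        (Ideal.subset_span (Or.inr ⟨δ, hδβ, hδd, rfl⟩))
  · -- hard direction
    intro hJle
    have hfJ : f ∈ 𝔭 := hJle (hJ ▸ Ideal.subset_span (Or.inl (Or.inl rfl)))
    rw [hI, Ideal.span_le]
    rintro g ((hg | ⟨ζ, hζα, hζd, rfl⟩) | ⟨δ, hδβ, hδd, rfl⟩)
    · rw [Set.mem_singleton_iff] at hg; subst hg; exact hfJ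
    · -- u-side monomials
      refine key 𝔭 hP (fun a => monoK a 0 0) he0U hmulU d α ζ hζα hζd ?_
      intro σ hσα hσd hres
      have hgen : ((∏ i : U, (α i).choose (σ i) : ℕ) : ZMod p) • monoK (α - σ) 0 0 ∈ 𝔭 :=
        hJle (hJ ▸ Ideal.subset_span (Or.inl (Or.inr ⟨σ, hσα, hσd, rfl⟩)))
      have hprod : (∏ i : U, (α i).choose (σ i)) = 1 := by
        refine Finset.prod_eq_one fun i _ => ?_
        rcases hres i with h | h
        · rw [h, Nat.choose_zero_right]
        · rw [h, Nat.choose_self]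
      rwa [hprod, Nat.cast_one, one_smul] at hgen
    · -- v-side monomials
      refine key 𝔭 hP (fun b => monoK 0 b 0) rfl hmulV d β δ hδβ hδd ?_
      intro σ hσβ hσd hres
      have hgen : ((∏ j : V, (β j).choose (σ j) : ℕ) : ZMod p) • monoK 0 (β - σ) 0 ∈ 𝔭 :=
        hJle (hJ ▸ Ideal.subset_span (Or.inr ⟨σ, hσβ, hσd, rfl⟩))
      have hprod : (∏ j : V, (β j).choose (σ j)) = 1 := by
        refine Finset.prod_eq_one fun j _ => ?_
        rcases hres j with h | h
        · rw [h, Nat.choose_zero_right]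
        · rw [h, Nat.choose_self]
      rwa [hprod, Nat.cast_one, one_smul] at hgen

end
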